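/- arXiv:2010.15080 — 2 statements merged into one kernel-verified Lean document; each statement's English description precedes it below -/
import Mathlib

section
/- For every integer n ≥ 1 and every real number x ≠ 0, the Golden derivative of the n-th Bernoulli–Fibonacci polynomial satisfies (B_n^F(φx) − B_n^F(−x/φ)) / ((φ + 1/φ)·x) = F_n · B_{n−1}^F(x), where φ = (1+√5)/2 is the golden ratio and F_n is the n-th Fibonacci number. -/
open scoped goldenRatio

def fibFact (n : ℕ) : ℕ := ∏ i ∈ Finset.range n, Nat.fib (i + 1)

noncomputable def phi : ℝ := (1 + Real.sqrt 5) / 2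

lemma fibFact_ne_zero (n : ℕ) : (fibFact n : ℝ) ≠ 0 := by
  have : 0 < fibFact n := Finset.prod_pos (fun i _ => Nat.fib_pos.mpr (Nat.succ_pos i))
  positivity

lemma fibFact_succ (n : ℕ) : fibFact (n + 1) = fibFact n * Nat.fib (n + 1) :=
  Finset.prod_range_succ _ _

lemma phi_eq : phi = φ := rfl

lemma mapped_gf (B : ℕ → Polynomial ℚ)
    (hB : (PowerSeries.mk fun n => Polynomial.C ((fibFact n : ℚ)⁻¹) * B n) *
          (PowerSeries.mk fun n =>
            if n = 0 then 0 else Polynomial.C ((fibFact n : ℚ)⁻¹)) =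
          PowerSeries.X *
          PowerSeries.mk (fun n => Polynomial.C ((fibFact n : ℚ)⁻¹) * Polynomial.X ^ n))
    (t : ℝ) :
    (PowerSeries.mk fun k => (fibFact k : ℝ)⁻¹ * Polynomial.aeval t (B k)) *
      (PowerSeries.mk fun k => if k = 0 then 0 else (fibFact k : ℝ)⁻¹) =
      PowerSeries.X * PowerSeries.mk (fun k => (fibFact k : ℝ)⁻¹ * t ^ k) := by
  have h := congrArg (PowerSeries.map ((Polynomial.aeval t : Polynomial ℚ →ₐ[ℚ] ℝ) : Polynomial ℚ →+* ℝ)) hB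
  rw [map_mul, map_mul] at h
  convert h using 2
  · ext k
    simp [PowerSeries.coeff_map, eq_ratCast]
  · ext k
    by_cases hk : k = 0 <;> simp [PowerSeries.coeff_map, hk, eq_ratCast]
  · exact (PowerSeries.map_X _).symm
  · ext k
    simp [PowerSeries.coeff_map, eq_ratCast]

/-- For every `n ≥ 1` and real `x ≠ 0`, the Golden derivative of the `n`-th
Bernoulli–Fibonacci polynomial equals `F_n` times the `(n-1)`-st one.
Here `B` is the (unique) sequence of Bernoulli–Fibonacci polynomials, characterized by the
generating-function identity
`(∑ B_n(x) z^n/F_n!) * (∑_{n≥1} z^n/F_n!) = z * ∑ x^n z^n/F_n!` in `(ℚ[x])⟦z⟧`. -/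
theorem bernoulliFib_golden_derivative
    (B : ℕ → Polynomial ℚ)
    (hB : (PowerSeries.mk fun n => Polynomial.C ((fibFact n : ℚ)⁻¹) * B n) *
          (PowerSeries.mk fun n =>
            if n = 0 then 0 else Polynomial.C ((fibFact n : ℚ)⁻¹)) =
          PowerSeries.X *
          PowerSeries.mk (fun n => Polynomial.C ((fibFact n : ℚ)⁻¹) * Polynomial.X ^ n))
    (n : ℕ) (hn : 1 ≤ n) (x : ℝ) (hx : x ≠ 0) :
    (Polynomial.aeval (phi * x) (B n) - Polynomial.aeval (-(x / phi)) (B n)) /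
        ((phi + 1 / phi) * x) =
      (Nat.fib n : ℝ) * Polynomial.aeval x (B (n - 1)) := by
  have h5 : Real.sqrt 5 ≠ 0 := by positivity
  have hinv : (1 : ℝ) / phi = -ψ := by rw [one_div, phi_eq, Real.inv_goldenRatio]
  have hsum : phi + 1 / phi = Real.sqrt 5 := by
    rw [hinv, phi_eq, ← Real.goldenRatio_sub_goldenConj]; ring
  have hneg : -(x / phi) = ψ * x := by
    rw [div_eq_mul_one_div, hinv]; ring
  set S : PowerSeries ℝ := PowerSeries.mk fun k => if k = 0 then 0 else (fibFact k : ℝ)⁻¹ with hS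
  have hSne : S ≠ 0 := by
    intro h
    have := congrArg (PowerSeries.coeff 1) h
    simp [hS, fibFact, PowerSeries.coeff_mk] at this
  have h1 := mapped_gf B hB (phi * x)
  have h2 := mapped_gf B hB (ψ * x)
  have h3 := mapped_gf B hB x
  have key : (PowerSeries.mk fun k => (fibFact k : ℝ)⁻¹ * Polynomial.aeval (phi * x) (B k))
      - (PowerSeries.mk fun k => (fibFact k : ℝ)⁻¹ * Polynomial.aeval (ψ * x) (B k))
      = (Real.sqrt 5 * x) • (PowerSeries.X *
          PowerSeries.mk fun k => (fibFact k : ℝ)⁻¹ * Polynomial.aeval x (B k)) := by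
    have hG : PowerSeries.X * ((PowerSeries.mk fun k => (fibFact k : ℝ)⁻¹ * (phi * x) ^ k)
        - (PowerSeries.mk fun k => (fibFact k : ℝ)⁻¹ * (ψ * x) ^ k))
        = (Real.sqrt 5 * x) • (PowerSeries.X * (PowerSeries.X *
            PowerSeries.mk fun k => (fibFact k : ℝ)⁻¹ * x ^ k)) := by
      ext k
      rcases k with _ | m
      · simp
      · rw [PowerSeries.coeff_smul, PowerSeries.coeff_succ_X_mul, PowerSeries.coeff_succ_X_mul]
        rcases m with _ | j
        · simp [phi_eq]
        · rw [PowerSeries.coeff_succ_X_mul]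
          simp only [map_sub, PowerSeries.coeff_mk]
          have hbinet : phi ^ (j + 1) - ψ ^ (j + 1) = Real.sqrt 5 * Nat.fib (j + 1) := by
            rw [phi_eq]
            have h := Real.coe_fib_eq (j + 1)
            field_simp at h ⊢
            linarith [h]
          have hff : (fibFact (j + 1) : ℝ) = (fibFact j : ℝ) * Nat.fib (j + 1) := by
            rw [fibFact_succ]; push_cast; ring
          have hfib : (Nat.fib (j + 1) : ℝ) ≠ 0 :=
            Nat.cast_ne_zero.mpr (Nat.fib_pos.mpr (Nat.succ_pos j)).ne'
          have expand : (phi * x) ^ (j + 1) - (ψ * x) ^ (j + 1)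
              = Real.sqrt 5 * Nat.fib (j + 1) * x ^ (j + 1) := by
            rw [mul_pow, mul_pow, ← sub_mul, hbinet]
          rw [← mul_sub, expand, hff]
          field_simp [fibFact_ne_zero]
          ring
    have hcomb : ((PowerSeries.mk fun k => (fibFact k : ℝ)⁻¹ * Polynomial.aeval (phi * x) (B k))
        - (PowerSeries.mk fun k => (fibFact k : ℝ)⁻¹ * Polynomial.aeval (ψ * x) (B k))
        - (Real.sqrt 5 * x) • (PowerSeries.X *
            PowerSeries.mk fun k => (fibFact k : ℝ)⁻¹ * Polynomial.aeval x (B k))) * S = 0 := by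
      rw [sub_mul, sub_mul, h1, h2, smul_mul_assoc, mul_assoc, h3, ← hG]
      ring
    have h0 := (mul_eq_zero.mp hcomb).resolve_right hSne
    exact sub_eq_zero.mp h0
  obtain ⟨m, rfl⟩ : ∃ m, n = m + 1 := ⟨n - 1, (Nat.succ_pred_eq_of_pos hn).symm⟩
  have hc := congrArg (PowerSeries.coeff (m + 1)) key
  rw [PowerSeries.coeff_smul, PowerSeries.coeff_succ_X_mul] at hc
  simp only [map_sub, PowerSeries.coeff_mk, smul_eq_mul] at hc
  have hff : (fibFact (m + 1) : ℝ) = (fibFact m : ℝ) * Nat.fib (m + 1) := by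
    rw [fibFact_succ]; push_cast; ring
  rw [hneg, hsum]
  simp only [Nat.add_sub_cancel]
  rw [div_eq_iff (mul_ne_zero h5 hx)]
  have hm := fibFact_ne_zero m
  have hm1 := fibFact_ne_zero (m + 1)
  have e1 : Polynomial.aeval (phi * x) (B (m + 1)) - Polynomial.aeval (ψ * x) (B (m + 1))
      = (fibFact (m + 1) : ℝ) * (Real.sqrt 5 * x * ((fibFact m : ℝ)⁻¹ * Polynomial.aeval x (B m))) := by
    rw [← hc]; field_simp
  rw [e1, hff]
  field_simp
end

section
/- For every integer n ≥ 2, evaluating the n-th Bernoulli–Fibonacci polynomial at 1 gives the n-th Bernoulli–Fibonacci number: B_n^F(1) = b_n^F. -/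
/-- For every `n ≥ 2`, `B_n^F(1) = b_n^F = B_n^F(0)`. Here `B` is the (unique) sequence of
Bernoulli–Fibonacci polynomials, characterized by the generating-function identity
`(∑ B_n(x) z^n/F_n!) * (∑_{n≥1} z^n/F_n!) = z * ∑ x^n z^n/F_n!` in `(ℚ[x])⟦z⟧`. -/
theorem bernoulliFib_eval_one
    (B : ℕ → Polynomial ℚ)
    (hB : (PowerSeries.mk fun n => Polynomial.C ((fibFact n : ℚ)⁻¹) * B n) *
          (PowerSeries.mk fun n =>
            if n = 0 then 0 else Polynomial.C ((fibFact n : ℚ)⁻¹)) =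
          PowerSeries.X *
          PowerSeries.mk (fun n => Polynomial.C ((fibFact n : ℚ)⁻¹) * Polynomial.X ^ n))
    (n : ℕ) (hn : 2 ≤ n) :
    (B n).eval 1 = (B n).eval 0 := by
  set d : ℕ → ℚ := fun i => (B i).eval 1 - (B i).eval 0 with hd
  have hfF : ∀ k, (fibFact k : ℚ) ≠ 0 := by
    intro k
    have : fibFact k ≠ 0 := by
      rw [fibFact, Finset.prod_ne_zero_iff]
      intro i _
      exact Nat.pos_iff_ne_zero.mp (Nat.fib_pos.mpr (Nat.succ_pos i))
    exact_mod_cast this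
  have hcoeff : ∀ k : ℕ,
      ∑ p ∈ Finset.HasAntidiagonal.antidiagonal (k+1),
        (Polynomial.C ((fibFact p.1 : ℚ)⁻¹) * B p.1) *
          (if p.2 = 0 then 0 else Polynomial.C ((fibFact p.2 : ℚ)⁻¹)) =
      Polynomial.C ((fibFact k : ℚ)⁻¹) * Polynomial.X ^ k := by
    intro k
    have h := congrArg (PowerSeries.coeff (k+1)) hB
    rw [PowerSeries.coeff_mul, PowerSeries.coeff_succ_X_mul, PowerSeries.coeff_mk] at h
    simpa [PowerSeries.coeff_mk] using h
  have key : ∀ k : ℕ,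
      ∑ i ∈ Finset.range (k+2),
        ((fibFact i : ℚ)⁻¹ * d i) *
          (if k+1-i = 0 then 0 else (fibFact (k+1-i) : ℚ)⁻¹) =
      (fibFact k : ℚ)⁻¹ * (1 - (0:ℚ)^k) := by
    intro k
    have h1 := congrArg (Polynomial.eval 1) (hcoeff k)
    have h0 := congrArg (Polynomial.eval 0) (hcoeff k)
    rw [Polynomial.eval_finset_sum] at h1 h0
    rw [Finset.Nat.sum_antidiagonal_eq_sum_range_succ_mk] at h1 h0
    simp only [apply_ite (Polynomial.eval (1:ℚ)), apply_ite (Polynomial.eval (0:ℚ)),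
      Polynomial.eval_mul, Polynomial.eval_C, Polynomial.eval_zero, Polynomial.eval_pow,
      Polynomial.eval_X, one_pow] at h1 h0
    have hsplit : ∀ i ∈ Finset.range (k+2),
        ((fibFact i : ℚ)⁻¹ * d i) * (if k+1-i = 0 then 0 else (fibFact (k+1-i) : ℚ)⁻¹)
        = ((fibFact i : ℚ)⁻¹ * (B i).eval 1) * (if k+1-i = 0 then 0 else (fibFact (k+1-i) : ℚ)⁻¹)
          - ((fibFact i : ℚ)⁻¹ * (B i).eval 0) * (if k+1-i = 0 then 0 else (fibFact (k+1-i) : ℚ)⁻¹) := by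
      intro i _
      simp only [hd]
      ring
    rw [Finset.sum_congr rfl hsplit, Finset.sum_sub_distrib, h1, h0]
    ring
  have hfF0 : fibFact 0 = 1 := by simp [fibFact]
  have hfF1 : fibFact 1 = 1 := by simp [fibFact]
  have hfF2 : fibFact 2 = 1 := by decide
  have hd0 : d 0 = 0 := by
    have h := key 0
    rw [Finset.sum_range_succ, Finset.sum_range_succ, Finset.sum_range_zero] at h
    norm_num [hfF0, hfF1] at h
    linarith
  have hd1 : d 1 = 1 := by
    have h := key 1
    rw [Finset.sum_range_succ, Finset.sum_range_succ, Finset.sum_range_succ,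
      Finset.sum_range_zero] at h
    norm_num [hfF0, hfF1, hfF2, hd0] at h
    linarith
  suffices h : ∀ m, 2 ≤ m → d m = 0 by
    have hmn := h n hn
    simp only [hd] at hmn
    linarith
  intro m
  induction m using Nat.strong_induction_on with
  | _ m ih =>
    intro hm
    obtain ⟨k, rfl⟩ : ∃ k, m = k + 1 := ⟨m - 1, by omega⟩
    have hk : 1 ≤ k := by omega
    have hkey := key (k+1)
    have hzero : ∀ i ∈ Finset.range (k+3), i ∉ ({1, k+1} : Finset ℕ) →
        ((fibFact i : ℚ)⁻¹ * d i) * (if k+1+1-i = 0 then 0 else (fibFact (k+1+1-i) : ℚ)⁻¹) = 0 := by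
      intro i hi hni
      simp only [Finset.mem_insert, Finset.mem_singleton, not_or] at hni
      simp only [Finset.mem_range] at hi
      rcases Nat.eq_zero_or_pos i with h0 | hpos
      · rw [h0, hd0]; ring
      · rcases Nat.lt_or_ge i (k+2) with hlt | hge
        · have h2 : 2 ≤ i := by omega
          rw [ih i (by omega) h2]; ring
        · have : k+1+1-i = 0 := by omega
          rw [this]; simp
    have hsub : ({1, k+1} : Finset ℕ) ⊆ Finset.range (k+3) := by
      intro x hx
      simp only [Finset.mem_insert, Finset.mem_singleton] at hx
      simp only [Finset.mem_range]
      omega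
    have hrange : (k+1)+2 = k+3 := by omega
    rw [hrange, ← Finset.sum_subset hsub hzero,
      Finset.sum_pair (by omega : (1:ℕ) ≠ k+1)] at hkey
    have e1 : k+1+1-1 = k+1 := by omega
    have e2 : k+1+1-(k+1) = 1 := by omega
    rw [e1, e2] at hkey
    have h0k : (0:ℚ)^(k+1) = 0 := by
      rw [zero_pow]; omega
    simp only [hd1, hfF1, Nat.cast_one, inv_one, one_mul, mul_one, h0k,
      if_neg (by omega : ¬ (k+1 = 0)), if_neg (by omega : ¬ (1 = 0))] at hkey
    -- hkey : (fibFact (k+1))⁻¹ + (fibFact (k+1))⁻¹ * d (k+1) = (fibFact (k+1))⁻¹ * (1 - 0)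
    have hinv : (fibFact (k+1) : ℚ)⁻¹ ≠ 0 := inv_ne_zero (hfF _)
    have hz : (fibFact (k+1) : ℚ)⁻¹ * d (k+1) = 0 := by linarith
    rcases mul_eq_zero.mp hz with h | h
    · exact absurd h hinv
    · exact h
end
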